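/- Let c > 0, let ρ : (0,∞) → ℝ be differentiable with ρ(τ) ≠ −1 for all τ > 0, and set J(τ) = c·(1 − ρ(τ)). Then for every τ > 0, the derivative of C̄(s) = J(s)/(s·(1+ρ(s))) vanishes at τ if and only if J'(τ) − (1+ρ(τ))·J(τ)/(2τ) = 0. (The proof uses the identity J'(τ)·(1−ρ(τ)) = −J(τ)·ρ'(τ), which follows from J = c·(1−ρ).) -/

import Mathlib

/-- The derivative of the criterion `C̄(τ) = J(τ)/(τ·(1+ρ(τ)))` vanishes at `τ > 0`
iff the synthetic gradient `ḡ(τ) = J'(τ) - (1+ρ(τ))·J(τ)/(2τ)` does, where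
`J(τ) = c·(1-ρ(τ))` with `c > 0` and `ρ` differentiable with `ρ(τ) ≠ -1` on `(0,∞)`. -/
theorem criterion_bar_deriv_eq_zero_iff
    (c : ℝ) (hc : 0 < c) (ρ : ℝ → ℝ)
    (hρdiff : ∀ τ > (0 : ℝ), DifferentiableAt ℝ ρ τ)
    (hρne : ∀ τ > (0 : ℝ), ρ τ ≠ -1)
    (J : ℝ → ℝ) (hJ : ∀ τ, J τ = c * (1 - ρ τ))
    (τ : ℝ) (hτ : 0 < τ) :
    deriv (fun s : ℝ => J s / (s * (1 + ρ s))) τ = 0 ↔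
      deriv J τ - (1 + ρ τ) * J τ / (2 * τ) = 0 := by
  have hJf : J = fun s => c * (1 - ρ s) := funext hJ
  subst hJf
  set d := deriv ρ τ with hd
  have hρ' : HasDerivAt ρ d τ := (hρdiff τ hτ).hasDerivAt
  have h1 : HasDerivAt (fun s => c * (1 - ρ s)) (c * (0 - d)) τ :=
    ((hasDerivAt_const τ (1:ℝ)).sub hρ').const_mul c
  have h2 : HasDerivAt (fun s => s * (1 + ρ s)) (1 * (1 + ρ τ) + τ * (0 + d)) τ :=
    (hasDerivAt_id τ).mul ((hasDerivAt_const τ (1:ℝ)).add hρ')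
  have hone : (1 : ℝ) + ρ τ ≠ 0 := by
    intro h
    exact hρne τ hτ (by linarith)
  have hne : τ * (1 + ρ τ) ≠ 0 := mul_ne_zero (ne_of_gt hτ) hone
  have hdiv := (h1.div h2 hne).deriv
  rw [show deriv (fun s => (fun s => c * (1 - ρ s)) s / (s * (1 + ρ s))) τ = _ from hdiv, h1.deriv]
  have hτne : τ ≠ 0 := ne_of_gt hτ
  rw [div_eq_zero_iff]
  have hpowne : (τ * (1 + ρ τ)) ^ 2 ≠ 0 := pow_ne_zero 2 hne
  constructor
  · rintro (h | h)
    · field_simp at h ⊢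
      ring_nf at h ⊢
      linarith
    · exact absurd h hpowne
  · intro h
    left
    field_simp at h ⊢
    ring_nf at h ⊢
    linarith
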